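/- Let d ≥ 1, let λ_1,…,λ_d > 0, let p_1,…,p_d be probability distributions on ℤ_+^d, and let α > 1 be such that ∑_{n∈ℤ_+^d} |n|^α p_i(n) < ∞ for every i. Define M_{ij} = λ_i ∑_{n∈ℤ_+^d} n_j p_i(n) and Q_{ij} = M_{ij} − δ_{ij} λ_i. Suppose v ∈ (0,∞)^d and ρ ∈ ℝ satisfy Q v = ρ v (i.e., ∑_j Q_{ij} v_j = ρ v_i for all i). Then, writing ⟨v,x⟩ = ∑_j v_j x_j, the quantity G(x) = ∑_{i : x_i ≥ 1} λ_i x_i ∑_{n∈ℤ_+^d} p_i(n) [ (⟨v,x⟩ + ⟨v,n⟩ − v_i)^α − ⟨v,x⟩^α ], defined for x ∈ ℤ_+^d ∖ {0}, satisfies G(x)/⟨v,x⟩^α → α ρ as |x| → ∞ (x ranging over ℤ_+^d ∖ {0}). -/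

import Mathlib

open Real

set_option maxHeartbeats 1600000

open Real

lemma GW_mvt_shift {β a t C : ℝ} (ht : -(1/2 : ℝ) ≤ t)
    (hC : ∀ r ∈ Set.uIcc (0:ℝ) t, |β * (1+r) ^ (β-1) - a| ≤ C) :
    |(1+t) ^ β - a * t - 1| ≤ C * |t| := by
  have hpos : ∀ r ∈ Set.uIcc (0:ℝ) t, (0:ℝ) < 1 + r := by
    intro r hr
    rcases Set.mem_uIcc.mp hr with ⟨h1, _⟩ | ⟨h1, _⟩ <;> nlinarith
  set f : ℝ → ℝ := fun r => (1+r) ^ β - a * r with hf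
  set f' : ℝ → ℝ := fun r => β * (1+r) ^ (β-1) - a with hf'
  have hder : ∀ r ∈ Set.uIcc (0:ℝ) t, HasDerivWithinAt f (f' r) (Set.uIcc (0:ℝ) t) r := by
    intro r hr
    have h1 : HasDerivAt (fun r : ℝ => (1+r) ^ β) (β * (1+r) ^ (β-1)) r := by
      have h0 := (Real.hasDerivAt_rpow_const (x := 1+r) (p := β) (Or.inl (hpos r hr).ne'))
      have h2 := h0.comp r ((hasDerivAt_id r).const_add 1)
      simpa [Function.comp_def] using h2
    exact ((h1.sub ((hasDerivAt_id r).const_mul a)).hasDerivWithinAt).congr_deriv (by simp [hf'])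
  have key := Convex.norm_image_sub_le_of_norm_hasDerivWithin_le hder
    (fun r hr => by simpa using hC r hr) (convex_uIcc 0 t)
    (Set.left_mem_uIcc) (Set.right_mem_uIcc)
  simpa [hf, Real.norm_eq_abs] using key

lemma GW_rpow_small {β t : ℝ} (hβ0 : 0 < β) (hβ1 : β ≤ 1) (ht : -1 ≤ t) :
    |(1+t) ^ β - 1| ≤ 2 * |t| ^ β := by
  rcases eq_or_lt_of_le ht with rfl | ht'
  · rw [show (1:ℝ) + -1 = 0 by ring, Real.zero_rpow hβ0.ne']
    norm_num [Real.one_rpow]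
  rcases le_or_gt 0 t with h0 | h0
  · have h1 : (1:ℝ) ≤ (1+t) ^ β := Real.one_le_rpow (by linarith) hβ0.le
    rw [abs_of_nonneg (by linarith), abs_of_nonneg h0]
    rcases le_or_gt t 1 with h2 | h2
    · have hB := rpow_one_add_le_one_add_mul_self (s := t) (by linarith) hβ0.le hβ1
      have h3 : t ≤ t ^ β := by
        rcases eq_or_lt_of_le h0 with rfl | h0'
        · rw [Real.zero_rpow hβ0.ne']
        · calc t = t ^ (1:ℝ) := (Real.rpow_one t).symm
            _ ≤ t ^ β := Real.rpow_le_rpow_of_exponent_ge h0' h2 hβ1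
      nlinarith [Real.rpow_nonneg h0 β]
    · have h3 : (1+t) ^ β ≤ (2*t) ^ β := Real.rpow_le_rpow (by linarith) (by linarith) hβ0.le
      have h4 : (2*t) ^ β = 2 ^ β * t ^ β := Real.mul_rpow (by norm_num) h0
      have h5 : (2:ℝ) ^ β ≤ 2 ^ (1:ℝ) := Real.rpow_le_rpow_of_exponent_le (by norm_num) hβ1
      rw [Real.rpow_one] at h5
      have h6 : (0:ℝ) ≤ t ^ β := Real.rpow_nonneg h0 β
      nlinarith
  · have h1 : (1+t) ^ β ≥ 1 + t := by
      calc (1:ℝ) + t = (1+t) ^ (1:ℝ) := (Real.rpow_one _).symm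
        _ ≤ (1+t) ^ β := Real.rpow_le_rpow_of_exponent_ge (by linarith) (by linarith) hβ1
    have h2 : (1+t) ^ β ≤ 1 := Real.rpow_le_one (by linarith) (by linarith) hβ0.le
    rw [abs_of_nonpos (by linarith), abs_of_neg h0]
    have h3 : -t ≤ (-t) ^ β := by
      calc -t = (-t) ^ (1:ℝ) := (Real.rpow_one _).symm
        _ ≤ (-t) ^ β := Real.rpow_le_rpow_of_exponent_ge (by linarith) (by linarith) hβ1
    nlinarith [Real.rpow_nonneg (show (0:ℝ) ≤ -t by linarith) β]

lemma GW_rpow_big {β t : ℝ} (hβ : 1 ≤ β) (ht : -(1/2:ℝ) ≤ t) :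
    |(1+t) ^ β - 1| ≤ β * 2 ^ β * (|t| + |t| ^ β) := by
  rcases eq_or_ne t 0 with rfl | ht0
  · simp
    positivity
  have hβ0 : (0:ℝ) < β := by linarith
  have habs0 : (0:ℝ) < |t| := abs_pos.mpr ht0
  have hC : ∀ r ∈ Set.uIcc (0:ℝ) t,
      |β * (1+r) ^ (β-1) - 0| ≤ β * 2 ^ (β-1) * (1 + |t| ^ (β-1)) := by
    intro r hr
    have hr1 : -(1/2:ℝ) ≤ r ∧ r ≤ |t| := by
      rcases Set.mem_uIcc.mp hr with ⟨h1, h2⟩ | ⟨h1, h2⟩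
      · exact ⟨by linarith, h2.trans (le_abs_self t)⟩
      · exact ⟨by linarith, le_trans h2 habs0.le⟩
    have hpos : (0:ℝ) < 1 + r := by linarith [hr1.1]
    have h2 : 1 + r ≤ 2 * max 1 |t| := by
      have h := hr1.2
      have h1 := le_max_left (1:ℝ) |t|
      have h2' := le_max_right (1:ℝ) |t|
      linarith
    have h3 : (1+r) ^ (β-1) ≤ (2 * max 1 |t|) ^ (β-1) :=
      Real.rpow_le_rpow hpos.le h2 (by linarith)
    have h4 : (2 * max 1 |t|) ^ (β-1) = 2 ^ (β-1) * (max 1 |t|) ^ (β-1) :=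
      Real.mul_rpow (by norm_num) (by positivity)
    have h5 : (max 1 |t|) ^ (β-1) ≤ 1 + |t| ^ (β-1) := by
      rcases le_total |t| 1 with h | h
      · rw [max_eq_left h, Real.one_rpow]
        linarith [Real.rpow_nonneg (abs_nonneg t) (β-1)]
      · rw [max_eq_right h]
        linarith
    have h6 : (0:ℝ) < 2 ^ (β-1) := Real.rpow_pos_of_pos (by norm_num) _
    rw [sub_zero, abs_of_nonneg (by positivity)]
    calc β * (1+r) ^ (β-1) ≤ β * (2 ^ (β-1) * (max 1 |t|) ^ (β-1)) := by
          rw [← h4]; exact mul_le_mul_of_nonneg_left h3 hβ0.le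
      _ ≤ β * 2 ^ (β-1) * (1 + |t| ^ (β-1)) := by
          have := mul_le_mul_of_nonneg_left h5 (show (0:ℝ) ≤ β * 2 ^ (β-1) by positivity)
          nlinarith
  have key := GW_mvt_shift (a := 0) ht hC
  rw [zero_mul, sub_zero] at key
  have hsplit : |t| ^ (β-1) * |t| = |t| ^ β := by
    rw [← Real.rpow_add_one (ne_of_gt habs0)]
    ring_nf
  have h7 : (0:ℝ) < 2 ^ (β-1) := Real.rpow_pos_of_pos (by norm_num) _
  have h8 : (2:ℝ) ^ (β-1) ≤ 2 ^ β := Real.rpow_le_rpow_of_exponent_le (by norm_num) (by linarith)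
  have h9 : (0:ℝ) ≤ |t| ^ β := Real.rpow_nonneg (abs_nonneg t) β
  have h10 : (0:ℝ) ≤ |t| ^ (β-1) := Real.rpow_nonneg (abs_nonneg t) (β-1)
  calc |(1+t) ^ β - 1| ≤ β * 2 ^ (β-1) * (1 + |t| ^ (β-1)) * |t| := key
    _ = β * 2 ^ (β-1) * (|t| + |t| ^ β) := by rw [← hsplit]; ring
    _ ≤ β * 2 ^ β * (|t| + |t| ^ β) := by
        have hA : (0:ℝ) ≤ |t| + |t| ^ β := by positivity
        have := mul_le_mul_of_nonneg_right (mul_le_mul_of_nonneg_left h8 hβ0.le) hA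
        linarith

lemma GW_key {α : ℝ} (hα : 1 < α) : ∃ K : ℝ, 0 < K ∧ ∀ t : ℝ, -(1/2:ℝ) ≤ t →
    |(1+t) ^ α - α * t - 1| ≤ K * (|t| ^ min α 2 + |t| ^ α) := by
  have hα0 : (0:ℝ) < α := by linarith
  refine ⟨α * (α+1) * 2 ^ α + 2 * α, by positivity, fun t ht => ?_⟩
  have h2 : (0:ℝ) < 2 ^ α := Real.rpow_pos_of_pos (by norm_num) _
  have h9 : (0:ℝ) ≤ |t| ^ α := Real.rpow_nonneg (abs_nonneg t) α
  rcases le_total α 2 with hα2 | hα2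
  · have hmin : min α 2 = α := min_eq_left hα2
    have hC : ∀ r ∈ Set.uIcc (0:ℝ) t,
        |α * (1+r) ^ (α-1) - α| ≤ α * (2 * |t| ^ (α-1)) := by
      intro r hr
      have hr1 : -(1:ℝ) ≤ r ∧ |r| ≤ |t| := by
        rcases Set.mem_uIcc.mp hr with ⟨h1, h2'⟩ | ⟨h1, h2'⟩
        · exact ⟨by linarith, by rw [abs_of_nonneg h1]; exact h2'.trans (le_abs_self t)⟩
        · refine ⟨by linarith, ?_⟩
          rw [abs_of_nonpos h2']
          have := neg_le_abs t
          linarith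
      have hsm := GW_rpow_small (β := α - 1) (t := r) (by linarith) (by linarith) hr1.1
      have hmono : |r| ^ (α-1) ≤ |t| ^ (α-1) :=
        Real.rpow_le_rpow (abs_nonneg r) hr1.2 (by linarith)
      have heq : α * (1+r) ^ (α-1) - α = α * ((1+r) ^ (α-1) - 1) := by ring
      rw [heq, abs_mul, abs_of_pos hα0]
      nlinarith
    have key := GW_mvt_shift ht hC
    have hsplit : |t| ^ (α-1) * |t| = |t| ^ α := by
      rcases eq_or_ne t 0 with rfl | ht0
      · simp [Real.zero_rpow hα0.ne']
      · rw [← Real.rpow_add_one (abs_ne_zero.mpr ht0)]; ring_nf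
    rw [hmin]
    calc |(1+t) ^ α - α * t - 1| ≤ α * (2 * |t| ^ (α-1)) * |t| := key
      _ = 2 * α * |t| ^ α := by rw [← hsplit]; ring
      _ ≤ (α * (α+1) * 2 ^ α + 2 * α) * (|t| ^ α + |t| ^ α) := by
          nlinarith [mul_nonneg (show (0:ℝ) ≤ α * (α+1) * 2 ^ α by positivity) h9,
            mul_nonneg hα0.le h9]
  · have hmin : min α 2 = 2 := min_eq_right hα2
    have hβ : 1 ≤ α - 1 := by linarith
    have hβ0 : (0:ℝ) < α - 1 := by linarith
    have hC : ∀ r ∈ Set.uIcc (0:ℝ) t,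
        |α * (1+r) ^ (α-1) - α| ≤ α * ((α-1) * 2 ^ (α-1) * (|t| + |t| ^ (α-1))) := by
      intro r hr
      have hr1 : -(1/2:ℝ) ≤ r ∧ |r| ≤ |t| := by
        rcases Set.mem_uIcc.mp hr with ⟨h1, h2'⟩ | ⟨h1, h2'⟩
        · exact ⟨by linarith, by rw [abs_of_nonneg h1]; exact h2'.trans (le_abs_self t)⟩
        · refine ⟨by linarith, ?_⟩
          rw [abs_of_nonpos h2']
          have := neg_le_abs t
          linarith
      have hbig := GW_rpow_big (β := α - 1) (t := r) hβ hr1.1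
      have hmono : |r| ^ (α-1) ≤ |t| ^ (α-1) :=
        Real.rpow_le_rpow (abs_nonneg r) hr1.2 (by linarith)
      have h2b : (0:ℝ) < 2 ^ (α-1) := Real.rpow_pos_of_pos (by norm_num) _
      have heq : α * (1+r) ^ (α-1) - α = α * ((1+r) ^ (α-1) - 1) := by ring
      rw [heq, abs_mul, abs_of_pos hα0]
      have hstep : |(1+r) ^ (α-1) - 1| ≤ (α-1) * 2 ^ (α-1) * (|t| + |t| ^ (α-1)) := by
        refine hbig.trans ?_
        have hA := mul_le_mul_of_nonneg_left (add_le_add hr1.2 hmono)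
          (show (0:ℝ) ≤ (α-1) * 2 ^ (α-1) by positivity)
        linarith
      exact mul_le_mul_of_nonneg_left hstep hα0.le
    have key := GW_mvt_shift ht hC
    have hsplit : |t| ^ (α-1) * |t| = |t| ^ α := by
      rcases eq_or_ne t 0 with rfl | ht0
      · simp [Real.zero_rpow hα0.ne', Real.zero_rpow hβ0.ne']
      · rw [← Real.rpow_add_one (abs_ne_zero.mpr ht0)]; ring_nf
    have hsq : |t| * |t| = |t| ^ (2:ℝ) := by rw [Real.rpow_two]; ring
    have h2b : (0:ℝ) < 2 ^ (α-1) := Real.rpow_pos_of_pos (by norm_num) _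
    have h8 : (2:ℝ) ^ (α-1) ≤ 2 ^ α := Real.rpow_le_rpow_of_exponent_le (by norm_num) (by linarith)
    have h10 : (0:ℝ) ≤ |t| ^ (2:ℝ) := Real.rpow_nonneg (abs_nonneg t) _
    rw [hmin]
    calc |(1+t) ^ α - α * t - 1| ≤ α * ((α-1) * 2 ^ (α-1) * (|t| + |t| ^ (α-1))) * |t| := key
      _ = α * (α-1) * 2 ^ (α-1) * (|t| ^ (2:ℝ) + |t| ^ α) := by rw [← hsplit, ← hsq]; ring
      _ ≤ (α * (α+1) * 2 ^ α + 2 * α) * (|t| ^ (2:ℝ) + |t| ^ α) := by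
          have hA : (0:ℝ) ≤ |t| ^ (2:ℝ) + |t| ^ α := by linarith
          have hcoef : α * (α-1) * 2 ^ (α-1) ≤ α * (α+1) * 2 ^ α + 2 * α := by
            have h11 : α * (α-1) ≤ α * (α+1) := by nlinarith
            have h12 := mul_le_mul h11 h8 h2b.le (by positivity : (0:ℝ) ≤ α * (α+1))
            linarith
          nlinarith [mul_le_mul_of_nonneg_right hcoef hA]

/-- For a multi-type continuous-time Galton–Watson process with reproduction rates `lam i`,
reproduction laws `p i` on `ℤ₊^d` with finite `α`-moments (`α > 1`), and a positive right
eigenvector `v` of the matrix `Q` with eigenvalue `ρ`, the generator applied to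
`V(x) = ⟨v,x⟩^α`, divided by `⟨v,x⟩^α`, converges to `α ρ` as `|x| → ∞` over
`x ∈ ℤ₊^d \ {0}`. -/
theorem multitype_galton_watson_generator_asymptotics
    (d : ℕ) (hd : 1 ≤ d)
    (lam : Fin d → ℝ) (hlam : ∀ i, 0 < lam i)
    (p : Fin d → (Fin d → ℕ) → ℝ) (hp : ∀ i n, 0 ≤ p i n)
    (hp1 : ∀ i, ∑' n : Fin d → ℕ, p i n = 1)
    (α : ℝ) (hα : 1 < α)
    (hmom : ∀ i, Summable (fun n : Fin d → ℕ => (∑ j, (n j : ℝ)) ^ α * p i n))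
    (v : Fin d → ℝ) (hv : ∀ j, 0 < v j) (ρ : ℝ)
    (hQv : ∀ i, ∑ j,
        ((lam i * ∑' n : Fin d → ℕ, (n j : ℝ) * p i n)
          - (if i = j then lam i else 0)) * v j = ρ * v i) :
    ∀ ε > 0, ∃ R : ℕ, ∀ x : Fin d → ℕ, x ≠ 0 → R ≤ ∑ j, x j →
      |(∑ i ∈ Finset.univ.filter (fun i => 1 ≤ x i),
          lam i * (x i : ℝ) *
            ∑' n : Fin d → ℕ,
              p i n * (((∑ j, v j * (x j : ℝ)) + (∑ j, v j * (n j : ℝ)) - v i) ^ α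
                - (∑ j, v j * (x j : ℝ)) ^ α))
          / (∑ j, v j * (x j : ℝ)) ^ α
        - α * ρ| < ε := by
  have hα0 : (0:ℝ) < α := by linarith
  have hne : Nonempty (Fin d) := ⟨⟨0, hd⟩⟩
  have hune : (Finset.univ : Finset (Fin d)).Nonempty := Finset.univ_nonempty
  -- constants
  set c₁ : ℝ := Finset.univ.inf' hune v with hc₁def
  set c₂ : ℝ := Finset.univ.sup' hune v with hc₂def
  set Λ : ℝ := Finset.univ.sup' hune lam with hΛdef
  have hc₁le : ∀ j, c₁ ≤ v j := fun j => Finset.inf'_le _ (Finset.mem_univ j)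
  have hc₂ge : ∀ j, v j ≤ c₂ := fun j => Finset.le_sup' _ (Finset.mem_univ j)
  have hΛge : ∀ i, lam i ≤ Λ := fun i => Finset.le_sup' _ (Finset.mem_univ i)
  have hc₁ : 0 < c₁ := by
    rw [hc₁def, Finset.lt_inf'_iff]
    exact fun j _ => hv j
  have hc₂0 : 0 < c₂ := lt_of_lt_of_le (hv ⟨0, hd⟩) (hc₂ge _)
  have hΛ0 : 0 < Λ := lt_of_lt_of_le (hlam ⟨0, hd⟩) (hΛge _)
  -- the exponent m
  set m : ℝ := min α 2 with hmdef
  have hm1 : 1 < m := lt_min hα one_lt_two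
  have hmα : m ≤ α := min_le_left _ _
  obtain ⟨K, hK0, hKey⟩ := GW_key hα
  -- notation
  set N : (Fin d → ℕ) → ℝ := fun n => ∑ j, (n j : ℝ) with hNdef
  set w : (Fin d → ℕ) → ℝ := fun n => ∑ j, v j * (n j : ℝ) with hwdef
  have hN0 : ∀ n, 0 ≤ N n := fun n => Finset.sum_nonneg fun j _ => Nat.cast_nonneg _
  have hw0 : ∀ n, 0 ≤ w n := fun n =>
    Finset.sum_nonneg fun j _ => mul_nonneg (hv j).le (Nat.cast_nonneg _)
  have hwle : ∀ n, w n ≤ c₂ * N n := by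
    intro n
    rw [hwdef, hNdef, Finset.mul_sum]
    exact Finset.sum_le_sum fun j _ =>
      mul_le_mul_of_nonneg_right (hc₂ge j) (Nat.cast_nonneg _)
  have hNle : ∀ n, N n ≤ 1 + N n ^ α := by
    intro n
    rcases le_total (N n) 1 with h | h
    · linarith [Real.rpow_nonneg (hN0 n) α]
    · have h2 : N n ^ (1:ℝ) ≤ N n ^ α := Real.rpow_le_rpow_of_exponent_le h hα.le
      rw [Real.rpow_one] at h2
      linarith
  -- summability facts
  have hps : ∀ i, Summable (p i) := by
    intro i
    by_contra h
    have h1 := hp1 i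
    rw [tsum_eq_zero_of_not_summable h] at h1
    exact one_ne_zero h1.symm
  have hmom' : ∀ i, Summable (fun n => p i n * N n ^ α) := by
    intro i
    have h1 := hmom i
    simpa [mul_comm] using h1
  have hbase : ∀ i, Summable (fun n => p i n * (1 + N n ^ α)) := by
    intro i
    have h1 := (hps i).add (hmom' i)
    simpa [mul_add, mul_one] using h1
  have SN : ∀ i, Summable (fun n => p i n * N n) := by
    intro i
    exact Summable.of_nonneg_of_le (fun n => mul_nonneg (hp i n) (hN0 n))
      (fun n => mul_le_mul_of_nonneg_left (hNle n) (hp i n)) (hbase i)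
  have Snj : ∀ i j, Summable (fun n => p i n * (n j : ℝ)) := by
    intro i j
    refine Summable.of_nonneg_of_le (fun n => mul_nonneg (hp i n) (Nat.cast_nonneg _))
      (fun n => ?_) (SN i)
    have h1 : (n j : ℝ) ≤ N n :=
      Finset.single_le_sum (f := fun j => ((n j : ℝ))) (fun j _ => Nat.cast_nonneg _)
        (Finset.mem_univ j)
    exact mul_le_mul_of_nonneg_left h1 (hp i n)
  have Sw : ∀ i, Summable (fun n => p i n * w n) := by
    intro i
    refine Summable.of_nonneg_of_le (fun n => mul_nonneg (hp i n) (hw0 n)) (fun n => ?_)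
      ((SN i).mul_left c₂)
    calc p i n * w n ≤ p i n * (c₂ * N n) := mul_le_mul_of_nonneg_left (hwle n) (hp i n)
      _ = c₂ * (p i n * N n) := by ring
  set u : Fin d → (Fin d → ℕ) → ℝ := fun i n => w n - v i with hudef
  have huabs : ∀ i n, |u i n| ≤ c₂ * (1 + N n) := by
    intro i n
    rw [abs_le]
    constructor
    · have h1 := hw0 n; have h2 := hc₂ge i; have h3 := hN0 n; have h4 := hv i
      simp only [hudef]
      nlinarith
    · have h1 := hwle n; have h2 := hv i; have h3 := hc₂ge i; have h4 := hN0 n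
      simp only [hudef]
      nlinarith
  have huα : ∀ i n, |u i n| ^ α ≤ c₂ ^ α * 2 ^ α * (1 + N n ^ α) := by
    intro i n
    have h1 : |u i n| ^ α ≤ (c₂ * (1 + N n)) ^ α :=
      Real.rpow_le_rpow (abs_nonneg _) (huabs i n) hα0.le
    have h2 : (c₂ * (1 + N n)) ^ α = c₂ ^ α * (1 + N n) ^ α :=
      Real.mul_rpow hc₂0.le (by linarith [hN0 n])
    have h3 : (1 + N n) ^ α ≤ 2 ^ α * (1 + N n ^ α) := by
      have h4 : 1 + N n ≤ 2 * max 1 (N n) := by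
        have h5 := le_max_left (1:ℝ) (N n)
        have h6 := le_max_right (1:ℝ) (N n)
        linarith
      have h5 : (1 + N n) ^ α ≤ (2 * max 1 (N n)) ^ α :=
        Real.rpow_le_rpow (by linarith [hN0 n]) h4 hα0.le
      have h6 : (2 * max 1 (N n)) ^ α = 2 ^ α * (max 1 (N n)) ^ α :=
        Real.mul_rpow (by norm_num) (by positivity)
      have h7 : (max 1 (N n)) ^ α ≤ 1 + N n ^ α := by
        rcases le_total (N n) 1 with h | h
        · rw [max_eq_left h, Real.one_rpow]
          linarith [Real.rpow_nonneg (hN0 n) α]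
        · rw [max_eq_right h]
          linarith [Real.rpow_nonneg (hN0 n) α]
      have h8 : (0:ℝ) < 2 ^ α := Real.rpow_pos_of_pos two_pos α
      nlinarith [Real.rpow_nonneg (show (0:ℝ) ≤ max 1 (N n) by positivity) α]
    have h9 : (0:ℝ) ≤ c₂ ^ α := (Real.rpow_pos_of_pos hc₂0 α).le
    nlinarith [Real.rpow_nonneg (abs_nonneg (u i n)) α, Real.rpow_nonneg (hN0 n) α]
  have Sα : ∀ i, Summable (fun n => p i n * |u i n| ^ α) := by
    intro i
    refine Summable.of_nonneg_of_le
      (fun n => mul_nonneg (hp i n) (Real.rpow_nonneg (abs_nonneg _) α)) (fun n => ?_)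
      ((hbase i).mul_left (c₂ ^ α * 2 ^ α))
    calc p i n * |u i n| ^ α ≤ p i n * (c₂ ^ α * 2 ^ α * (1 + N n ^ α)) :=
          mul_le_mul_of_nonneg_left (huα i n) (hp i n)
      _ = c₂ ^ α * 2 ^ α * (p i n * (1 + N n ^ α)) := by ring
  have hum : ∀ i n, |u i n| ^ m ≤ 1 + |u i n| ^ α := by
    intro i n
    rcases le_total (|u i n|) 1 with h | h
    · have h1 := Real.rpow_le_one (abs_nonneg _) h (show (0:ℝ) ≤ m by linarith)
      linarith [Real.rpow_nonneg (abs_nonneg (u i n)) α]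
    · have h1 := Real.rpow_le_rpow_of_exponent_le h hmα
      linarith
  have Sm : ∀ i, Summable (fun n => p i n * |u i n| ^ m) := by
    intro i
    refine Summable.of_nonneg_of_le
      (fun n => mul_nonneg (hp i n) (Real.rpow_nonneg (abs_nonneg _) m)) (fun n => ?_)
      ((hps i).add (Sα i))
    calc p i n * |u i n| ^ m ≤ p i n * (1 + |u i n| ^ α) :=
          mul_le_mul_of_nonneg_left (hum i n) (hp i n)
      _ = p i n + p i n * |u i n| ^ α := by ring
  have Su : ∀ i, Summable (fun n => p i n * u i n) := by
    intro i
    refine Summable.of_abs ?_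
    refine Summable.of_nonneg_of_le (fun n => abs_nonneg _) (fun n => ?_)
      (((hps i).add (SN i)).mul_left c₂)
    rw [abs_mul, abs_of_nonneg (hp i n)]
    calc p i n * |u i n| ≤ p i n * (c₂ * (1 + N n)) :=
          mul_le_mul_of_nonneg_left (huabs i n) (hp i n)
      _ = c₂ * (p i n + p i n * N n) := by ring
  -- first order identity
  have hμ : ∀ i, lam i * (∑' n, p i n * u i n) = ρ * v i := by
    intro i
    have e1 : (∑' n, p i n * u i n) = (∑' n, p i n * w n) - v i := by
      have e2 : (fun n => p i n * u i n) = fun n => p i n * w n - p i n * v i := by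
        funext n
        simp only [hudef]
        ring
      rw [e2, Summable.tsum_sub (Sw i) ((hps i).mul_right (v i)), tsum_mul_right, hp1 i, one_mul]
    have e3 : (∑' n, p i n * w n) = ∑ j, v j * ∑' n, p i n * (n j : ℝ) := by
      calc (∑' n, p i n * w n) = ∑' n, ∑ j, v j * (p i n * (n j : ℝ)) := by
            refine tsum_congr fun n => ?_
            rw [hwdef, Finset.mul_sum]
            exact Finset.sum_congr rfl fun j _ => by ring
        _ = ∑ j, ∑' n, v j * (p i n * (n j : ℝ)) :=
            Summable.tsum_finsetSum fun j _ => ((Snj i j).mul_left (v j))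
        _ = ∑ j, v j * ∑' n, p i n * (n j : ℝ) :=
            Finset.sum_congr rfl fun j _ => tsum_mul_left
    have h4 := hQv i
    simp only [sub_mul, ite_mul, zero_mul, Finset.sum_sub_distrib, Finset.sum_ite_eq,
      Finset.mem_univ, if_pos] at h4
    have h5 : ∑ j, lam i * (∑' n, ((n j : ℝ)) * p i n) * v j
        = ∑ j, lam i * (v j * ∑' n, p i n * (n j : ℝ)) := by
      refine Finset.sum_congr rfl fun j _ => ?_
      rw [show (∑' n, ((n j : ℝ)) * p i n) = ∑' n, p i n * (n j : ℝ) from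
        tsum_congr fun n => mul_comm _ _]
      ring
    rw [e1, e3, mul_sub, Finset.mul_sum]
    rw [h5] at h4
    linarith
  -- moment bound B
  set B : ℝ := Finset.univ.sup' hune
      (fun i => (∑' n, p i n * |u i n| ^ m) + ∑' n, p i n * |u i n| ^ α) + 1 with hBdef
  have hBi : ∀ i, (∑' n, p i n * |u i n| ^ m) + (∑' n, p i n * |u i n| ^ α) ≤ B := by
    intro i
    have h1 := Finset.le_sup'
      (f := fun i => (∑' n, p i n * |u i n| ^ m) + ∑' n, p i n * |u i n| ^ α)
      (Finset.mem_univ i)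
    rw [hBdef]
    linarith
  have hB0 : 0 < B := by
    have i0 : Fin d := ⟨0, hd⟩
    have h1 : (0:ℝ) ≤ ∑' n, p i0 n * |u i0 n| ^ m :=
      tsum_nonneg fun n => mul_nonneg (hp i0 n) (Real.rpow_nonneg (abs_nonneg _) m)
    have h2 : (0:ℝ) ≤ ∑' n, p i0 n * |u i0 n| ^ α :=
      tsum_nonneg fun n => mul_nonneg (hp i0 n) (Real.rpow_nonneg (abs_nonneg _) α)
    have h3 := hBi i0
    have h4 := Finset.le_sup'
      (f := fun i => (∑' n, p i n * |u i n| ^ m) + ∑' n, p i n * |u i n| ^ α)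
      (Finset.mem_univ i0)
    rw [hBdef]
    linarith
  intro ε hε
  set C : ℝ := Λ * K * B / c₁ with hCdef
  have hC0 : 0 < C := by
    rw [hCdef]
    positivity
  have htend := tendsto_rpow_neg_atTop (show (0:ℝ) < m - 1 by linarith)
  obtain ⟨s₀, hs₀⟩ :=
    Filter.eventually_atTop.mp (htend.eventually_lt_const (div_pos hε hC0))
  obtain ⟨R, hR⟩ := exists_nat_gt ((max s₀ (max (2 * c₂) 1)) / c₁)
  refine ⟨R, fun x hx hRx => ?_⟩
  set s : ℝ := ∑ j, v j * (x j : ℝ) with hsdef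
  have hsge : c₁ * (∑ j, (x j : ℝ)) ≤ s := by
    rw [hsdef, Finset.mul_sum]
    exact Finset.sum_le_sum fun j _ => mul_le_mul_of_nonneg_right (hc₁le j) (Nat.cast_nonneg _)
  have hRcast : (R : ℝ) ≤ ∑ j, (x j : ℝ) := by
    have h1 : (R : ℝ) ≤ ((∑ j, x j : ℕ) : ℝ) := Nat.cast_le.mpr hRx
    rwa [Nat.cast_sum] at h1
  have hsbig : max s₀ (max (2 * c₂) 1) < s := by
    rw [div_lt_iff₀ hc₁] at hR
    have h2 : max s₀ (max (2 * c₂) 1) < c₁ * R := by linarith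
    have h3 : c₁ * (R : ℝ) ≤ c₁ * ∑ j, (x j : ℝ) := mul_le_mul_of_nonneg_left hRcast hc₁.le
    linarith
  have hs1 : 1 ≤ s := le_trans (le_trans (le_max_right _ _) (le_max_right s₀ _)) hsbig.le
  have hs2c : 2 * c₂ ≤ s := le_trans (le_trans (le_max_left _ _) (le_max_right s₀ _)) hsbig.le
  have hss₀ : s₀ ≤ s := le_trans (le_max_left _ _) hsbig.le
  have hspos : 0 < s := lt_of_lt_of_le one_pos hs1
  have hsα : 0 < s ^ α := Real.rpow_pos_of_pos hspos α
  have hsm : 0 < s ^ m := Real.rpow_pos_of_pos hspos m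
  -- error term
  set E : Fin d → (Fin d → ℕ) → ℝ :=
    fun i n => (s + u i n) ^ α - s ^ α - α * s ^ (α - 1) * u i n with hEdef
  have ht2 : ∀ i n, -(1/2 : ℝ) ≤ u i n / s := by
    intro i n
    rw [le_div_iff₀ hspos]
    have h1 := hw0 n
    have h2 := hc₂ge i
    simp only [hudef]
    nlinarith
  have hEbound : ∀ i n, |E i n| ≤ K * s ^ (α - m) * (|u i n| ^ m + |u i n| ^ α) := by
    intro i n
    have htn := ht2 i n
    have h1 : s + u i n = s * (1 + u i n / s) := by field_simp
    have h2 : (s + u i n) ^ α = s ^ α * (1 + u i n / s) ^ α := by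
      rw [h1, Real.mul_rpow hspos.le (by linarith : (0:ℝ) ≤ 1 + u i n / s)]
    have h3 : α * s ^ (α - 1) * u i n = s ^ α * (α * (u i n / s)) := by
      rw [Real.rpow_sub hspos, Real.rpow_one]
      field_simp
    have h4 : E i n = s ^ α * ((1 + u i n / s) ^ α - α * (u i n / s) - 1) := by
      simp only [hEdef]
      rw [h2, h3]
      ring
    have h5 := hKey (u i n / s) htn
    rw [← hmdef] at h5
    have h6 : |E i n| ≤ s ^ α * (K * (|u i n / s| ^ m + |u i n / s| ^ α)) := by
      rw [h4, abs_mul, abs_of_pos hsα]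
      exact mul_le_mul_of_nonneg_left h5 hsα.le
    have h7m : |u i n / s| ^ m = |u i n| ^ m / s ^ m := by
      rw [abs_div, abs_of_pos hspos, Real.div_rpow (abs_nonneg _) hspos.le]
    have h7a : |u i n / s| ^ α = |u i n| ^ α / s ^ α := by
      rw [abs_div, abs_of_pos hspos, Real.div_rpow (abs_nonneg _) hspos.le]
    rw [h7m, h7a] at h6
    have h8 : s ^ α / s ^ m = s ^ (α - m) := (Real.rpow_sub hspos α m).symm
    have h9 : 1 ≤ s ^ (α - m) := Real.one_le_rpow hs1 (by linarith)
    have e : s ^ α * (K * (|u i n| ^ m / s ^ m + |u i n| ^ α / s ^ α))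
        = K * (s ^ α / s ^ m) * |u i n| ^ m + K * |u i n| ^ α := by
      field_simp
    rw [e, h8] at h6
    have ha : (0:ℝ) ≤ |u i n| ^ m := Real.rpow_nonneg (abs_nonneg _) m
    have hb : (0:ℝ) ≤ |u i n| ^ α := Real.rpow_nonneg (abs_nonneg _) α
    have h10 : K * |u i n| ^ α ≤ K * s ^ (α - m) * |u i n| ^ α := by
      nlinarith [mul_nonneg (mul_nonneg hK0.le hb) (sub_nonneg.mpr h9)]
    linarith
  have SEabs : ∀ i, Summable (fun n => |p i n * E i n|) := by
    intro i
    refine Summable.of_nonneg_of_le (fun n => abs_nonneg _) (fun n => ?_)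
      (((Sm i).add (Sα i)).mul_left (K * s ^ (α - m)))
    rw [abs_mul, abs_of_nonneg (hp i n)]
    calc p i n * |E i n| ≤ p i n * (K * s ^ (α - m) * (|u i n| ^ m + |u i n| ^ α)) :=
          mul_le_mul_of_nonneg_left (hEbound i n) (hp i n)
      _ = K * s ^ (α - m) * (p i n * |u i n| ^ m + p i n * |u i n| ^ α) := by ring
  have SE : ∀ i, Summable (fun n => p i n * E i n) := fun i => (SEabs i).of_abs
  have hsplit : ∀ i, (∑' n, p i n * ((s + w n - v i) ^ α - s ^ α))
      = α * s ^ (α - 1) * (∑' n, p i n * u i n) + ∑' n, p i n * E i n := by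
    intro i
    have e1 : (fun n => p i n * ((s + w n - v i) ^ α - s ^ α))
        = fun n => (α * s ^ (α - 1)) * (p i n * u i n) + p i n * E i n := by
      funext n
      have hbase' : s + w n - v i = s + u i n := by
        simp only [hudef]
        ring
      rw [hbase']
      simp only [hEdef]
      ring
    rw [e1, Summable.tsum_add ((Su i).mul_left _) (SE i), tsum_mul_left]
  have hEi : ∀ i, |∑' n, p i n * E i n| ≤ K * s ^ (α - m) * B := by
    intro i
    have h1 : |∑' n, p i n * E i n| ≤ ∑' n, |p i n * E i n| := by
      have h0 := norm_tsum_le_tsum_norm (f := fun n => p i n * E i n)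
        (by simpa only [Real.norm_eq_abs] using SEabs i)
      simpa only [Real.norm_eq_abs] using h0
    have h2 : ∑' n, |p i n * E i n|
        ≤ ∑' n, (K * s ^ (α - m)) * (p i n * |u i n| ^ m + p i n * |u i n| ^ α) := by
      refine Summable.tsum_le_tsum (fun n => ?_) (SEabs i) (((Sm i).add (Sα i)).mul_left (K * s ^ (α - m)))
      rw [abs_mul, abs_of_nonneg (hp i n)]
      calc p i n * |E i n| ≤ p i n * (K * s ^ (α - m) * (|u i n| ^ m + |u i n| ^ α)) :=
            mul_le_mul_of_nonneg_left (hEbound i n) (hp i n)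
        _ = (K * s ^ (α - m)) * (p i n * |u i n| ^ m + p i n * |u i n| ^ α) := by ring
    have h3 : ∑' n, (K * s ^ (α - m)) * (p i n * |u i n| ^ m + p i n * |u i n| ^ α)
        = (K * s ^ (α - m)) * ((∑' n, p i n * |u i n| ^ m) + ∑' n, p i n * |u i n| ^ α) := by
      rw [tsum_mul_left, Summable.tsum_add (Sm i) (Sα i)]
    have h4 := hBi i
    have h5 : (0:ℝ) ≤ K * s ^ (α - m) := by positivity
    nlinarith
  -- assemble
  set F := Finset.univ.filter (fun i => 1 ≤ x i) with hFdef
  have hG : (∑ i ∈ F, lam i * (x i : ℝ) * ∑' n, p i n * ((s + w n - v i) ^ α - s ^ α))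
      = α * ρ * s ^ α + ∑ i ∈ F, lam i * (x i : ℝ) * ∑' n, p i n * E i n := by
    have e1 : ∀ i ∈ F, lam i * (x i : ℝ) * (∑' n, p i n * ((s + w n - v i) ^ α - s ^ α))
        = α * s ^ (α - 1) * ρ * (v i * (x i : ℝ))
          + lam i * (x i : ℝ) * ∑' n, p i n * E i n := by
      intro i _
      rw [hsplit i]
      have h2 := hμ i
      linear_combination (α * s ^ (α - 1) * (x i : ℝ)) * h2
    rw [Finset.sum_congr rfl e1, Finset.sum_add_distrib]
    congr 1
    rw [← Finset.mul_sum]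
    have e2 : ∑ i ∈ F, v i * (x i : ℝ) = s := by
      rw [hsdef, hFdef]
      refine Finset.sum_filter_of_ne ?_
      intro j _ hj
      have hxj : x j ≠ 0 := by
        intro h0
        apply hj
        rw [h0]
        simp
      omega
    rw [e2]
    have e3 : s ^ (α - 1) * s = s ^ α := by
      rw [← Real.rpow_add_one hspos.ne']
      ring_nf
    linear_combination (α * ρ) * e3
  -- final bound
  have hErr : |∑ i ∈ F, lam i * (x i : ℝ) * ∑' n, p i n * E i n|
      ≤ K * s ^ (α - m) * B * (Λ * (s / c₁)) := by
    have h1 := Finset.abs_sum_le_sum_abs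
      (fun i => lam i * (x i : ℝ) * ∑' n, p i n * E i n) F
    have h2 : ∑ i ∈ F, |lam i * (x i : ℝ) * ∑' n, p i n * E i n|
        ≤ ∑ i ∈ F, lam i * (x i : ℝ) * (K * s ^ (α - m) * B) := by
      refine Finset.sum_le_sum fun i _ => ?_
      rw [abs_mul, abs_of_nonneg (mul_nonneg (hlam i).le (Nat.cast_nonneg _))]
      exact mul_le_mul_of_nonneg_left (hEi i) (mul_nonneg (hlam i).le (Nat.cast_nonneg _))
    have h3 : ∑ i ∈ F, lam i * (x i : ℝ) * (K * s ^ (α - m) * B)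
        = (K * s ^ (α - m) * B) * ∑ i ∈ F, lam i * (x i : ℝ) := by
      rw [Finset.mul_sum]
      exact Finset.sum_congr rfl fun i _ => by ring
    have h4 : ∑ i ∈ F, lam i * (x i : ℝ) ≤ Λ * (s / c₁) := by
      have h5 : ∑ i ∈ F, lam i * (x i : ℝ) ≤ ∑ i, lam i * (x i : ℝ) := by
        refine Finset.sum_le_sum_of_subset_of_nonneg (Finset.filter_subset _ _)
          fun i _ _ => mul_nonneg (hlam i).le (Nat.cast_nonneg _)
      have h6 : ∑ i, lam i * (x i : ℝ) ≤ Λ * ∑ i, (x i : ℝ) := by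
        rw [Finset.mul_sum]
        exact Finset.sum_le_sum fun i _ =>
          mul_le_mul_of_nonneg_right (hΛge i) (Nat.cast_nonneg _)
      have h7 : (∑ i, (x i : ℝ)) ≤ s / c₁ := by
        rw [le_div_iff₀ hc₁]
        linarith [hsge]
      calc ∑ i ∈ F, lam i * (x i : ℝ) ≤ Λ * ∑ i, (x i : ℝ) := le_trans h5 h6
        _ ≤ Λ * (s / c₁) := mul_le_mul_of_nonneg_left h7 hΛ0.le
    have h8 : (0:ℝ) ≤ K * s ^ (α - m) * B := by positivity
    calc |∑ i ∈ F, lam i * (x i : ℝ) * ∑' n, p i n * E i n|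
        ≤ ∑ i ∈ F, lam i * (x i : ℝ) * (K * s ^ (α - m) * B) := le_trans h1 h2
      _ = (K * s ^ (α - m) * B) * ∑ i ∈ F, lam i * (x i : ℝ) := h3
      _ ≤ (K * s ^ (α - m) * B) * (Λ * (s / c₁)) := mul_le_mul_of_nonneg_left h4 h8
  -- put everything together
  have hgoal1 : (∑ i ∈ F, lam i * (x i : ℝ) *
        ∑' n, p i n * ((s + (∑ j, v j * (n j : ℝ)) - v i) ^ α - s ^ α)) / s ^ α - α * ρ
      = (∑ i ∈ F, lam i * (x i : ℝ) * ∑' n, p i n * E i n) / s ^ α := by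
    rw [show (∑ i ∈ F, lam i * (x i : ℝ) *
        ∑' n, p i n * ((s + (∑ j, v j * (n j : ℝ)) - v i) ^ α - s ^ α))
      = (∑ i ∈ F, lam i * (x i : ℝ) * ∑' n, p i n * ((s + w n - v i) ^ α - s ^ α)) from rfl]
    rw [hG]
    field_simp
    ring
  rw [hgoal1]
  have e4 : s ^ (α - m) * s / s ^ α = s ^ (-(m - 1)) := by
    rw [div_eq_iff hsα.ne', ← Real.rpow_add_one hspos.ne', ← Real.rpow_add hspos]
    congr 1
    ring
  have hfin : |(∑ i ∈ F, lam i * (x i : ℝ) * ∑' n, p i n * E i n) / s ^ α|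
      ≤ C * s ^ (-(m - 1)) := by
    rw [abs_div, abs_of_pos hsα]
    rw [div_le_iff₀ hsα]
    have e5 : C * s ^ (-(m - 1)) * s ^ α = K * s ^ (α - m) * B * (Λ * (s / c₁)) := by
      rw [hCdef, ← e4]
      field_simp
    rw [e5]
    exact hErr
  have hlast := hs₀ s hss₀
  calc |(∑ i ∈ F, lam i * (x i : ℝ) * ∑' n, p i n * E i n) / s ^ α|
      ≤ C * s ^ (-(m - 1)) := hfin
    _ < C * (ε / C) := mul_lt_mul_of_pos_left hlast hC0
    _ = ε := by field_simp
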